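/- For every m ∈ ℕ, the map sending y ∈ LOP(m) to the vector consisting of the coordinates y_{ij} (1 ≤ i < j ≤ m), the coordinates ȳ_{ij} = 1 − y_{ij} (1 ≤ i < j ≤ m), the two constants z = 0 and h = 1, and the coordinates t_{ijk} = 1 − (y_{ij} + y_{jk} − y_{ik}) (1 ≤ i < j < k ≤ m), is an injective affine map whose image is exactly the set of 0/1 vectors satisfying z = 0, h = 1, the equations y_{ij} + ȳ_{ij} + z + h = 2 for all 1 ≤ i < j ≤ m, and the equations y_{ij} + y_{jk} + ȳ_{ik} + t_{ijk} = 2 for all 1 ≤ i < j < k ≤ m; each of these equations has exactly four variables with coefficient 1, so LOP(m) is affinely equivalent to a face of a double covering polytope. -/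

import Mathlib

/-- `y ∈ LOP m`: `y` is the characteristic vector of a linear order (permutation `π`)
on `{1, …, m}`, with coordinates `y i j` for `1 ≤ i < j ≤ m` equal to `1` iff `π i < π j`;
coordinates outside the index range are normalized to `0`. -/
def LOP (m : ℕ) : Set (ℕ → ℕ → ℝ) :=
  {y | (∀ i j, ¬(1 ≤ i ∧ i < j ∧ j ≤ m) → y i j = 0) ∧
    ∃ π : ℕ → ℕ, Set.BijOn π (Set.Icc 1 m) (Set.Icc 1 m) ∧
      ∀ i j, 1 ≤ i → i < j → j ≤ m → y i j = if π i < π j then (1 : ℝ) else 0}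

/-- The target set: 0/1 vectors `(u, ū, z, h, t)` with `z = 0`, `h = 1`,
satisfying the double-covering equations `u i j + ū i j + z + h = 2` for
`1 ≤ i < j ≤ m` and `u i j + u j k + ū i k + t i j k = 2` for `1 ≤ i < j < k ≤ m`
(each equation involving exactly four variables with coefficient `1`);
out-of-range coordinates are normalized to `0`. -/
def DCPface (m : ℕ) :
    Set ((ℕ → ℕ → ℝ) × (ℕ → ℕ → ℝ) × ℝ × ℝ × (ℕ → ℕ → ℕ → ℝ)) :=
  {p | (∀ i j, ¬(1 ≤ i ∧ i < j ∧ j ≤ m) → p.1 i j = 0 ∧ p.2.1 i j = 0) ∧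
    (∀ i j, 1 ≤ i → i < j → j ≤ m →
      (p.1 i j = 0 ∨ p.1 i j = 1) ∧ (p.2.1 i j = 0 ∨ p.2.1 i j = 1)) ∧
    p.2.2.1 = 0 ∧ p.2.2.2.1 = 1 ∧
    (∀ i j k, ¬(1 ≤ i ∧ i < j ∧ j < k ∧ k ≤ m) → p.2.2.2.2 i j k = 0) ∧
    (∀ i j k, 1 ≤ i → i < j → j < k → k ≤ m →
      p.2.2.2.2 i j k = 0 ∨ p.2.2.2.2 i j k = 1) ∧
    (∀ i j, 1 ≤ i → i < j → j ≤ m → p.1 i j + p.2.1 i j + p.2.2.1 + p.2.2.2.1 = 2) ∧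
    (∀ i j k, 1 ≤ i → i < j → j < k → k ≤ m →
      p.1 i j + p.1 j k + p.2.1 i k + p.2.2.2.2 i j k = 2)}


/-- Auxiliary wrapper type carrying the elements of `{1, …, m}`, with no
pre-existing order instances. -/
structure LOPWrap (m : ℕ) where
  val : ℕ
  mem : val ∈ Finset.Icc 1 m

lemma LOPWrap.ext' {m : ℕ} {a b : LOPWrap m} (h : a.val = b.val) : a = b := by
  cases a; cases b; simpa using h

def LOPWrap.equivSubtype (m : ℕ) : LOPWrap m ≃ {x // x ∈ Finset.Icc 1 m} where
  toFun a := ⟨a.val, a.mem⟩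
  invFun a := ⟨a.1, a.2⟩
  left_inv a := rfl
  right_inv a := rfl

noncomputable instance (m : ℕ) : Fintype (LOPWrap m) :=
  Fintype.ofEquiv _ (LOPWrap.equivSubtype m).symm

lemma LOPWrap.card (m : ℕ) : Fintype.card (LOPWrap m) = m := by
  rw [Fintype.card_congr (LOPWrap.equivSubtype m)]
  simp [Nat.card_Icc]

lemma lop_exists_perm (m : ℕ) (u : ℕ → ℕ → ℝ)
    (h01 : ∀ i j, 1 ≤ i → i < j → j ≤ m → u i j = 0 ∨ u i j = 1)
    (htri : ∀ i j k, 1 ≤ i → i < j → j < k → k ≤ m →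
      u i j + u j k - u i k = 0 ∨ u i j + u j k - u i k = 1) :
    ∃ π : ℕ → ℕ, Set.BijOn π (Set.Icc 1 m) (Set.Icc 1 m) ∧
      ∀ i j, 1 ≤ i → i < j → j ≤ m → u i j = if π i < π j then (1 : ℝ) else 0 := by
  classical
  set r : ℕ → ℕ → Prop := fun a b => (a < b ∧ u a b = 1) ∨ (b < a ∧ u b a = 0) with hr
  have hmem : ∀ x, x ∈ Finset.Icc 1 m ↔ 1 ≤ x ∧ x ≤ m := by
    intro x; simp [Finset.mem_Icc]
  -- transitivity of r
  have htrans : ∀ a b c : LOPWrap m, r a.val b.val → r b.val c.val → r a.val c.val := by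
    intro a' b' c' hab hbc
    obtain ⟨a, ha⟩ := a'; obtain ⟨b, hb⟩ := b'; obtain ⟨c, hc⟩ := c'
    simp only at hab hbc ⊢
    rw [hmem] at ha hb hc
    rcases hab with ⟨h1, e1⟩ | ⟨h1, e1⟩ <;> rcases hbc with ⟨h2, e2⟩ | ⟨h2, e2⟩
    · left
      refine ⟨h1.trans h2, ?_⟩
      have ht := htri a b c ha.1 h1 h2 hc.2
      rcases h01 a c ha.1 (h1.trans h2) hc.2 with h | h <;>
        rcases ht with h' | h' <;> linarith
    · rcases Nat.lt_trichotomy a c with hac | hac | hac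
      · left
        refine ⟨hac, ?_⟩
        have ht := htri a c b ha.1 hac h2 hb.2
        rcases h01 a c ha.1 hac hc.2 with h | h <;> rcases ht with h' | h' <;> linarith
      · subst hac; linarith
      · right
        refine ⟨hac, ?_⟩
        have ht := htri c a b hc.1 hac h1 hb.2
        rcases h01 c a hc.1 hac ha.2 with h | h <;> rcases ht with h' | h' <;> linarith
    · rcases Nat.lt_trichotomy a c with hac | hac | hac
      · left
        refine ⟨hac, ?_⟩
        have ht := htri b a c hb.1 h1 hac hc.2
        rcases h01 a c ha.1 hac hc.2 with h | h <;> rcases ht with h' | h' <;> linarith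
      · subst hac; linarith
      · right
        refine ⟨hac, ?_⟩
        have ht := htri b c a hb.1 h2 hac ha.2
        rcases h01 c a hc.1 hac ha.2 with h | h <;> rcases ht with h' | h' <;> linarith
    · right
      refine ⟨h2.trans h1, ?_⟩
      have ht := htri c b a hc.1 h2 h1 ha.2
      rcases h01 c a hc.1 (h2.trans h1) ha.2 with h | h <;> rcases ht with h' | h' <;> linarith
  have htricho : ∀ a b : LOPWrap m, r a.val b.val ∨ a = b ∨ r b.val a.val := by
    intro a b
    have ha := (hmem a.val).1 a.mem
    have hb := (hmem b.val).1 b.mem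
    rcases Nat.lt_trichotomy a.val b.val with h | h | h
    · rcases h01 a.val b.val ha.1 h hb.2 with h' | h'
      · right; right; right; exact ⟨h, h'⟩
      · left; left; exact ⟨h, h'⟩
    · right; left; exact LOPWrap.ext' h
    · rcases h01 b.val a.val hb.1 h ha.2 with h' | h'
      · left; right; exact ⟨h, h'⟩
      · right; right; left; exact ⟨h, h'⟩
  haveI hSTO : IsStrictTotalOrder (LOPWrap m) (fun a b => r a.val b.val) :=
    { trichotomous := fun a b h1 h2 => ((htricho a b).resolve_left h1).resolve_right h2
      irrefl := fun a h => by
        rcases h with ⟨h, _⟩ | ⟨h, _⟩ <;> exact absurd h (lt_irrefl _)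
      trans := htrans }
  letI : DecidableRel (fun a b : LOPWrap m => r a.val b.val) := fun a b => Classical.dec _
  letI : LinearOrder (LOPWrap m) := linearOrderOfSTO (fun a b => r a.val b.val)
  have hlt : ∀ a b : LOPWrap m, a < b ↔ r a.val b.val := fun a b => Iff.rfl
  let e := monoEquivOfFin (LOPWrap m) (LOPWrap.card m)
  set π : ℕ → ℕ := fun x =>
    if hx : x ∈ Finset.Icc 1 m then ((e.symm ⟨x, hx⟩ : Fin m) : ℕ) + 1 else 0 with hπ
  refine ⟨π, ⟨?_, ?_, ?_⟩, ?_⟩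
  · intro x hx
    rw [Set.mem_Icc] at hx
    have hx' : x ∈ Finset.Icc 1 m := (hmem x).2 hx
    rw [hπ]
    simp only [dif_pos hx']
    have := (e.symm ⟨x, hx'⟩).2
    simp only [Set.mem_Icc]
    omega
  · intro x hx y hy hxy
    rw [Set.mem_Icc] at hx hy
    have hx' : x ∈ Finset.Icc 1 m := (hmem x).2 hx
    have hy' : y ∈ Finset.Icc 1 m := (hmem y).2 hy
    rw [hπ] at hxy
    simp only [dif_pos hx', dif_pos hy'] at hxy
    have h1 : e.symm ⟨x, hx'⟩ = e.symm ⟨y, hy'⟩ := Fin.ext (by omega)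
    have h2 := e.symm.injective h1
    simpa using congrArg LOPWrap.val h2
  · intro v hv
    rw [Set.mem_Icc] at hv
    set i : Fin m := ⟨v - 1, by omega⟩ with hi
    refine ⟨(e i).val, ?_, ?_⟩
    · rw [Set.mem_Icc]; exact (hmem _).1 (e i).mem
    · rw [hπ]
      simp only [dif_pos (e i).mem]
      have h1 : (⟨(e i).val, (e i).mem⟩ : LOPWrap m) = e i := rfl
      rw [h1, e.symm_apply_apply]
      simp [hi]; omega
  · intro i j hi hij hj
    have hi' : i ∈ Finset.Icc 1 m := (hmem i).2 ⟨hi, le_of_lt (lt_of_lt_of_le hij hj)⟩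
    have hj' : j ∈ Finset.Icc 1 m := (hmem j).2 ⟨le_trans hi (le_of_lt hij), hj⟩
    have hmono : ∀ a b : LOPWrap m, a < b ↔ e.symm a < e.symm b := by
      intro a b; exact (e.symm.lt_iff_lt).symm
    rcases h01 i j hi hij hj with h | h
    · rw [h, if_neg]
      rw [hπ]
      simp only [dif_pos hi', dif_pos hj']
      have hrji : r j i := Or.inr ⟨hij, h⟩
      have h1 : (⟨j, hj'⟩ : LOPWrap m) < ⟨i, hi'⟩ := (hlt _ _).2 hrji
      have h2 := (hmono _ _).1 h1
      simp only [Fin.lt_def] at h2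
      omega
    · rw [h, if_pos]
      rw [hπ]
      simp only [dif_pos hi', dif_pos hj']
      have hrij : r i j := Or.inl ⟨hij, h⟩
      have h1 : (⟨i, hi'⟩ : LOPWrap m) < ⟨j, hj'⟩ := (hlt _ _).2 hrij
      have h2 := (hmono _ _).1 h1
      simp only [Fin.lt_def] at h2
      omega

/-- linear part -/
noncomputable def lopLin (m : ℕ) : (ℕ → ℕ → ℝ) →ₗ[ℝ]
    ((ℕ → ℕ → ℝ) × (ℕ → ℕ → ℝ) × ℝ × ℝ × (ℕ → ℕ → ℕ → ℝ)) where
  toFun y := (y,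
    fun i j => if 1 ≤ i ∧ i < j ∧ j ≤ m then -(y i j) else 0,
    0, 0,
    fun i j k => if 1 ≤ i ∧ i < j ∧ j < k ∧ k ≤ m then -(y i j + y j k - y i k) else 0)
  map_add' y z := by
    simp only [Prod.mk_add_mk, Prod.mk.injEq, Pi.add_apply]
    refine ⟨trivial, ?_, by ring, by ring, ?_⟩
    · funext i j
      simp only [Pi.add_apply]
      split <;> ring
    · funext i j k
      simp only [Pi.add_apply]
      split <;> ring
  map_smul' c y := by
    simp only [Prod.smul_mk, Prod.mk.injEq, RingHom.id_apply]
    refine ⟨trivial, ?_, by simp, by simp, ?_⟩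
    · funext i j
      simp only [Pi.smul_apply, smul_eq_mul]
      split <;> ring
    · funext i j k
      simp only [Pi.smul_apply, smul_eq_mul]
      split <;> ring

/-- the affine map -/
noncomputable def lopAff (m : ℕ) : (ℕ → ℕ → ℝ) →ᵃ[ℝ]
    ((ℕ → ℕ → ℝ) × (ℕ → ℕ → ℝ) × ℝ × ℝ × (ℕ → ℕ → ℕ → ℝ)) :=
  AffineMap.mk'
    (fun y => (y,
      fun i j => if 1 ≤ i ∧ i < j ∧ j ≤ m then 1 - y i j else 0,
      0, 1,
      fun i j k => if 1 ≤ i ∧ i < j ∧ j < k ∧ k ≤ m then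
        1 - (y i j + y j k - y i k) else 0))
    (lopLin m) 0
    (by
      intro y
      show _ = lopLin m (y - 0) + _
      simp only [sub_zero]
      have : lopLin m y = (y,
        fun i j => if 1 ≤ i ∧ i < j ∧ j ≤ m then -(y i j) else 0,
        0, 0,
        fun i j k => if 1 ≤ i ∧ i < j ∧ j < k ∧ k ≤ m then
          -(y i j + y j k - y i k) else 0) := rfl
      rw [this]
      simp only [Prod.mk_add_mk, Prod.mk.injEq, Pi.add_apply]
      refine ⟨by simp, ?_, by ring, by ring, ?_⟩
      · funext i j
        simp only [Pi.add_apply, Pi.zero_apply]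
        split <;> ring
      · funext i j k
        simp only [Pi.add_apply, Pi.zero_apply]
        split <;> ring)

/-- the map `y ↦ (y, ȳ, 0, 1, t)` with `ȳ i j = 1 - y i j` and
`t i j k = 1 - (y i j + y j k - y i k)` is an injective affine map whose image
is exactly `DCPface m`; so `LOP m` is affinely equivalent to a face of a double
covering polytope. -/
theorem lop_affinely_equivalent_to_dcp_face (m : ℕ) :
    ∃ A : (ℕ → ℕ → ℝ) →ᵃ[ℝ]
        ((ℕ → ℕ → ℝ) × (ℕ → ℕ → ℝ) × ℝ × ℝ × (ℕ → ℕ → ℕ → ℝ)),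
      (∀ y, A y =
        (y,
         fun i j => if 1 ≤ i ∧ i < j ∧ j ≤ m then 1 - y i j else 0,
         0, 1,
         fun i j k => if 1 ≤ i ∧ i < j ∧ j < k ∧ k ≤ m then
           1 - (y i j + y j k - y i k) else 0)) ∧
      Function.Injective A ∧ A '' LOP m = DCPface m := by
  refine ⟨lopAff m, fun y => rfl, ?_, ?_⟩
  · intro y z h
    have := congrArg Prod.fst h
    exact this
  · ext p
    constructor
    · rintro ⟨y, ⟨hy0, π, hbij, hy⟩, rfl⟩
      refine ⟨?_, ?_, rfl, rfl, ?_, ?_, ?_, ?_⟩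
      · intro i j h
        exact ⟨hy0 i j h, if_neg h⟩
      · intro i j h1 h2 h3
        constructor
        · rw [show (lopAff m y).1 i j = y i j from rfl, hy i j h1 h2 h3]
          split <;> simp
        · rw [show (lopAff m y).2.1 i j
              = if 1 ≤ i ∧ i < j ∧ j ≤ m then 1 - y i j else 0 from rfl,
            if_pos ⟨h1, h2, h3⟩, hy i j h1 h2 h3]
          split <;> norm_num
      · intro i j k h
        exact if_neg h
      · intro i j k h1 h2 h3 h4
        rw [show (lopAff m y).2.2.2.2 i j k
            = if 1 ≤ i ∧ i < j ∧ j < k ∧ k ≤ m then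
                1 - (y i j + y j k - y i k) else 0 from rfl,
          if_pos ⟨h1, h2, h3, h4⟩, hy i j h1 h2 (by omega), hy j k (by omega) h3 h4,
          hy i k h1 (h2.trans h3) h4]
        split_ifs <;> first | omega | norm_num
      · intro i j h1 h2 h3
        show y i j + (if 1 ≤ i ∧ i < j ∧ j ≤ m then 1 - y i j else 0) + 0 + 1 = 2
        rw [if_pos ⟨h1, h2, h3⟩]; ring
      · intro i j k h1 h2 h3 h4
        show y i j + y j k + (if 1 ≤ i ∧ i < k ∧ k ≤ m then 1 - y i k else 0)
          + (if 1 ≤ i ∧ i < j ∧ j < k ∧ k ≤ m then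
              1 - (y i j + y j k - y i k) else 0) = 2
        rw [if_pos ⟨h1, h2.trans h3, h4⟩, if_pos ⟨h1, h2, h3, h4⟩]; ring
    · intro hp
      obtain ⟨u, ub, z, h, t⟩ := p
      obtain ⟨h0, h01, hz, hh, ht0, ht01, heq1, heq2⟩ := hp
      simp only at h0 h01 hz hh ht0 ht01 heq1 heq2
      subst hz; subst hh
      have hbar : ∀ i j, 1 ≤ i → i < j → j ≤ m → ub i j = 1 - u i j := by
        intro i j h1 h2 h3
        have := heq1 i j h1 h2 h3
        linarith
      have htri : ∀ i j k, 1 ≤ i → i < j → j < k → k ≤ m →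
          u i j + u j k - u i k = 0 ∨ u i j + u j k - u i k = 1 := by
        intro i j k h1 h2 h3 h4
        have e := heq2 i j k h1 h2 h3 h4
        rw [hbar i k h1 (h2.trans h3) h4] at e
        rcases ht01 i j k h1 h2 h3 h4 with h' | h'
        · right; linarith
        · left; linarith
      obtain ⟨π, hbij, hy⟩ := lop_exists_perm m u
        (fun i j a b c => (h01 i j a b c).1) htri
      refine ⟨u, ⟨fun i j hc => (h0 i j hc).1, π, hbij, hy⟩, ?_⟩
      show (u,
        fun i j => if 1 ≤ i ∧ i < j ∧ j ≤ m then 1 - u i j else 0,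
        (0 : ℝ), (1 : ℝ),
        fun i j k => if 1 ≤ i ∧ i < j ∧ j < k ∧ k ≤ m then
          1 - (u i j + u j k - u i k) else 0) = (u, ub, 0, 1, t)
      simp only [Prod.mk.injEq]
      refine ⟨trivial, ?_, trivial, trivial, ?_⟩
      · funext i j
        by_cases hc : 1 ≤ i ∧ i < j ∧ j ≤ m
        · rw [if_pos hc]
          exact (hbar i j hc.1 hc.2.1 hc.2.2).symm
        · rw [if_neg hc]
          exact ((h0 i j hc).2).symm
      · funext i j k
        by_cases hc : 1 ≤ i ∧ i < j ∧ j < k ∧ k ≤ m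
        · rw [if_pos hc]
          obtain ⟨h1, h2, h3, h4⟩ := hc
          have e := heq2 i j k h1 h2 h3 h4
          rw [hbar i k h1 (h2.trans h3) h4] at e
          linarith
        · rw [if_neg hc]
          exact (ht0 i j k hc).symm
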